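/- arXiv:2012.06956 — 4 statements merged into one kernel-verified Lean document; each statement's English description precedes it below -/
import Mathlib

section
/- Let n be a positive integer, y ∈ ℝⁿ, and let x ∈ {0,1}ⁿ. Suppose i and j are distinct indices with x_i = 1, x_j = 0 and y_i ≤ y_j. Define x' ∈ {0,1}ⁿ by x'_i = 0, x'_j = 1, and x'_ℓ = x_ℓ for all ℓ ∉ {i, j}. Then x' has the same number of coordinates equal to 1 as x, and ‖x' − y‖₂ ≤ ‖x − y‖₂. -/
/-- Swap step in the correctness proof of the mask projection algorithm. -/
theorem stmt_1 (n : ℕ) (hn : 0 < n) (y x x' : EuclideanSpace ℝ (Fin n))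
    (hx01 : ∀ ℓ, x ℓ = 0 ∨ x ℓ = 1)
    (i j : Fin n) (hij : i ≠ j)
    (hxi : x i = 1) (hxj : x j = 0) (hyij : y i ≤ y j)
    (hx' : ∀ ℓ, x' ℓ = if ℓ = i then 0 else if ℓ = j then 1 else x ℓ) :
    (Finset.univ.filter fun ℓ => x' ℓ = 1).card
      = (Finset.univ.filter fun ℓ => x ℓ = 1).card
    ∧ ‖x' - y‖ ≤ ‖x - y‖ := by
  have hswap : ∀ ℓ, x' ℓ = x (Equiv.swap i j ℓ) := by
    intro ℓ
    rw [hx' ℓ]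
    by_cases h1 : ℓ = i
    · subst h1; rw [Equiv.swap_apply_left, hxj]; simp
    · by_cases h2 : ℓ = j
      · subst h2; rw [Equiv.swap_apply_right, hxi, if_neg (Ne.symm hij)]; simp
      · rw [Equiv.swap_apply_of_ne_of_ne h1 h2, if_neg h1, if_neg h2]
  constructor
  · apply Finset.card_bij' (fun a _ => Equiv.swap i j a) (fun a _ => Equiv.swap i j a)
    · intro a ha
      simp only [Finset.mem_filter, Finset.mem_univ, true_and] at ha ⊢
      rw [← hswap]; exact ha
    · intro a ha
      simp only [Finset.mem_filter, Finset.mem_univ, true_and] at ha ⊢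
      rw [hswap, Equiv.swap_apply_self]; exact ha
    · intro a _; exact Equiv.swap_apply_self i j a
    · intro a _; exact Equiv.swap_apply_self i j a
  · rw [EuclideanSpace.norm_eq, EuclideanSpace.norm_eq]
    apply Real.sqrt_le_sqrt
    have key : ∑ ℓ, ((x' - y) ℓ) ^ 2 ≤ ∑ ℓ, ((x - y) ℓ) ^ 2 := by
      have hrw : ∀ ℓ : Fin n, (x' - y) ℓ = x' ℓ - y ℓ := fun ℓ => rfl
      have hrw2 : ∀ ℓ : Fin n, (x - y) ℓ = x ℓ - y ℓ := fun ℓ => rfl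
      simp only [hrw, hrw2]
      rw [← Finset.add_sum_erase _ _ (Finset.mem_univ i),
        ← Finset.add_sum_erase _ _ (Finset.mem_univ i),
        ← Finset.add_sum_erase _ _ (Finset.mem_erase.2 ⟨(Ne.symm hij), Finset.mem_univ j⟩),
        ← Finset.add_sum_erase _ _ (Finset.mem_erase.2 ⟨(Ne.symm hij), Finset.mem_univ j⟩)]
      have hrest : ∀ ℓ ∈ (Finset.univ.erase i).erase j,
          (x' ℓ - y ℓ) ^ 2 = (x ℓ - y ℓ) ^ 2 := by
        intro ℓ hℓ
        simp only [Finset.mem_erase] at hℓ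
        rw [hx' ℓ, if_neg hℓ.2.1, if_neg hℓ.1]
      rw [Finset.sum_congr rfl hrest]
      have hx'i : x' i = 0 := by rw [hx' i]; simp
      have hx'j : x' j = 1 := by rw [hx' j]; simp [Ne.symm hij]
      rw [hx'i, hx'j, hxi, hxj]
      nlinarith [hyij]
    simpa using key
end

section
/- Let n be a positive integer, k ≤ n, and y ∈ ℝⁿ. Let T̂ be a set of indices with |T̂| = k such that y_i ≥ y_j for every i ∈ T̂ and every j ∉ T̂, and let x̂ ∈ {0,1}ⁿ be the indicator vector of T̂ (x̂_i = 1 if i ∈ T̂ and x̂_i = 0 otherwise). Then for every x ∈ {0,1}ⁿ having exactly k coordinates equal to 1, ‖x̂ − y‖₂ ≤ ‖x − y‖₂. In other words, x̂ is a Euclidean projection of y onto the set S = {x ∈ {0,1}ⁿ : x has exactly k ones}. -/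
lemma sum_le_of_card_eq' {α : Type*} [DecidableEq α] (s t : Finset α) (f : α → ℝ)
    (h : s.card = t.card) (hle : ∀ j ∈ s, ∀ i ∈ t, f j ≤ f i) :
    ∑ j ∈ s, f j ≤ ∑ i ∈ t, f i := by
  let e := Finset.equivOfCardEq h
  calc ∑ j ∈ s, f j = ∑ a : s, f a := (Finset.sum_coe_sort s f).symm
    _ ≤ ∑ a : s, f (e a) :=
        Finset.sum_le_sum fun a _ => hle a a.2 (e a) (e a).2
    _ = ∑ b : t, f b := e.sum_comp fun b => f (b : α)
    _ = ∑ i ∈ t, f i := Finset.sum_coe_sort t f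

/-- Correctness of the mask projection: the indicator vector of a set of `k`
indices carrying the `k` largest entries of `y` is a Euclidean projection of
`y` onto the binary vectors with exactly `k` ones. -/
theorem stmt_2 (n k : ℕ) (hn : 0 < n) (hk : k ≤ n)
    (y : EuclideanSpace ℝ (Fin n))
    (T : Finset (Fin n)) (hT : T.card = k)
    (hTtop : ∀ i ∈ T, ∀ j ∉ T, y j ≤ y i)
    (xhat : EuclideanSpace ℝ (Fin n))
    (hxhat : ∀ i, xhat i = if i ∈ T then 1 else 0) :
    ∀ x : EuclideanSpace ℝ (Fin n),
      (∀ i, x i = 0 ∨ x i = 1) →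
      (Finset.univ.filter fun i => x i = 1).card = k →
      ‖xhat - y‖ ≤ ‖x - y‖ := by
  intro x hx01 hxcard
  rw [EuclideanSpace.norm_eq, EuclideanSpace.norm_eq]
  apply Real.sqrt_le_sqrt
  set A : Finset (Fin n) := Finset.univ.filter fun i => x i = 1 with hA
  -- key sum inequality
  have hcard : (A \ T).card = (T \ A).card := by
    exact Finset.card_sdiff_comm (by rw [hT, hxcard])
  have hsum : ∑ i ∈ A, y i ≤ ∑ i ∈ T, y i := by
    have key : ∑ j ∈ A \ T, y j ≤ ∑ i ∈ T \ A, y i := by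
      apply sum_le_of_card_eq' _ _ _ hcard
      intro j hj i hi
      exact hTtop i (Finset.mem_sdiff.mp hi).1 j (Finset.mem_sdiff.mp hj).2
    have hA' : ∑ i ∈ A, y i = ∑ i ∈ A ∩ T, y i + ∑ i ∈ A \ T, y i :=
      (Finset.sum_inter_add_sum_sdiff A T y).symm
    have hT' : ∑ i ∈ T, y i = ∑ i ∈ A ∩ T, y i + ∑ i ∈ T \ A, y i := by
      rw [Finset.inter_comm]
      exact (Finset.sum_inter_add_sum_sdiff T A y).symm
    rw [hA', hT']
    linarith
  -- expand both sides
  have expand : ∀ z : EuclideanSpace ℝ (Fin n), (∀ i, z i = 0 ∨ z i = 1) →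
      ∑ i, ‖(z - y) i‖ ^ 2 =
        ∑ i ∈ Finset.univ.filter (fun i => z i = 1), (1 - 2 * y i)
          + ∑ i, (y i) ^ 2 := by
    intro z hz
    have : ∀ i, ‖(z - y) i‖ ^ 2 =
        (if z i = 1 then (1 - 2 * y i) else 0) + (y i) ^ 2 := by
      intro i
      have hzi : (z - y) i = z i - y i := rfl
      rcases hz i with h | h <;> simp [hzi, h, sq_abs] <;> ring
    rw [Finset.sum_congr rfl fun i _ => this i, Finset.sum_add_distrib,
      ← Finset.sum_filter]
  have hxhat01 : ∀ i, xhat i = 0 ∨ xhat i = 1 := by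
    intro i; rw [hxhat i]; split <;> simp
  have hxhatfilter : Finset.univ.filter (fun i => xhat i = 1) = T := by
    ext i
    simp only [Finset.mem_filter, Finset.mem_univ, true_and, hxhat i]
    split <;> simp_all
  rw [expand xhat hxhat01, expand x hx01, hxhatfilter]
  have e1 : ∑ i ∈ T, (1 - 2 * y i) = k - 2 * ∑ i ∈ T, y i := by
    rw [Finset.sum_sub_distrib, ← Finset.mul_sum]
    simp [hT]
  have e2 : ∑ i ∈ A, (1 - 2 * y i) = k - 2 * ∑ i ∈ A, y i := by
    rw [Finset.sum_sub_distrib, ← Finset.mul_sum]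
    simp [hxcard]
  rw [e1]
  rw [show (Finset.univ.filter fun i => x i = 1) = A from rfl, e2]
  linarith
end

section
/- Let P, Q be positive integers, k ≤ Q, and Z ∈ ℝ^{P×Q}. Let Ĉ be a set of column indices with |Ĉ| = k such that the Euclidean norm of the q-th column of Z is at least the Euclidean norm of the q'-th column of Z for every q ∈ Ĉ and every q' ∉ Ĉ. Define Ẑ ∈ ℝ^{P×Q} by keeping the columns of Z indexed by Ĉ intact and setting all other columns to zero. Then for every matrix W ∈ ℝ^{P×Q} having at most k nonzero columns, ‖Ẑ − Z‖_F ≤ ‖W − Z‖_F. -/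
/-- Frobenius norm of a real `P × Q` matrix. -/
noncomputable def frobNorm {P Q : ℕ} (A : Matrix (Fin P) (Fin Q) ℝ) : ℝ :=
  Real.sqrt (∑ p, ∑ q, (A p q) ^ 2)

/-- Euclidean (ℓ₂) norm of the `q`-th column of a real `P × Q` matrix. -/
noncomputable def colNorm {P Q : ℕ} (A : Matrix (Fin P) (Fin Q) ℝ) (q : Fin Q) : ℝ :=
  Real.sqrt (∑ p, (A p q) ^ 2)

/-- Correctness of the column-pruning projection: keeping the `k` columns of
largest ℓ₂ norm intact and zeroing the remaining columns yields a Frobenius-norm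
projection onto the set of matrices with at most `k` nonzero columns. -/
theorem stmt_5 (P Q k : ℕ) (hP : 0 < P) (hQ : 0 < Q) (hk : k ≤ Q)
    (Z : Matrix (Fin P) (Fin Q) ℝ)
    (C : Finset (Fin Q)) (hC : C.card = k)
    (hCtop : ∀ q ∈ C, ∀ q' ∉ C, colNorm Z q' ≤ colNorm Z q)
    (Zhat : Matrix (Fin P) (Fin Q) ℝ)
    (hZhat : ∀ p q, Zhat p q = if q ∈ C then Z p q else 0) :
    ∀ W : Matrix (Fin P) (Fin Q) ℝ,
      (Finset.univ.filter fun q => ∃ p, W p q ≠ 0).card ≤ k →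
      frobNorm (Zhat - Z) ≤ frobNorm (W - Z) := by
  intro W hW
  set S : Finset (Fin Q) := Finset.univ.filter fun q => ∃ p, W p q ≠ 0 with hSdef
  set f : Fin Q → ℝ := fun q => ∑ p, (Z p q) ^ 2 with hfdef
  have hfnn : ∀ q, 0 ≤ f q := fun q => Finset.sum_nonneg fun p _ => sq_nonneg _
  have hmono : ∀ q ∈ C, ∀ q' ∉ C, f q' ≤ f q := by
    intro q hq q' hq'
    have h := hCtop q hq q' hq'
    have h1 : Real.sqrt (f q') ≤ Real.sqrt (f q) := h
    calc f q' = Real.sqrt (f q') ^ 2 := (Real.sq_sqrt (hfnn q')).symm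
      _ ≤ Real.sqrt (f q) ^ 2 := by
          exact pow_le_pow_left₀ (Real.sqrt_nonneg _) h1 2
      _ = f q := Real.sq_sqrt (hfnn q)
  -- key: ∑_{S} f ≤ ∑_{C} f
  have hkey : ∑ q ∈ S, f q ≤ ∑ q ∈ C, f q := by
    have hcard : (S \ C).card ≤ (C \ S).card := by
      have h1 := Finset.card_sdiff_add_card_inter S C
      have h2 := Finset.card_sdiff_add_card_inter C S
      have h3 : (S ∩ C).card = (C ∩ S).card := by rw [Finset.inter_comm]
      have h4 : S.card ≤ C.card := by rw [hC]; exact hW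
      omega
    obtain ⟨T, hTsub, hTcard⟩ := Finset.exists_subset_card_eq hcard
    have hdiff : ∑ q ∈ S \ C, f q ≤ ∑ q ∈ C \ S, f q := by
      have e : (S \ C : Finset (Fin Q)) ≃ (T : Finset (Fin Q)) :=
        Finset.equivOfCardEq hTcard.symm
      have step1 : ∑ q ∈ S \ C, f q ≤ ∑ q ∈ T, f q := by
        calc ∑ q ∈ S \ C, f q = ∑ x : (S \ C : Finset (Fin Q)), f x :=
              (Finset.sum_coe_sort _ f).symm
          _ ≤ ∑ x : (S \ C : Finset (Fin Q)), f (e x) := by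
              apply Finset.sum_le_sum
              intro x _
              have hxnC : (x : Fin Q) ∉ C := (Finset.mem_sdiff.mp x.2).2
              have hex : ((e x : Fin Q)) ∈ C \ S := hTsub (e x).2
              exact hmono _ (Finset.mem_sdiff.mp hex).1 _ hxnC
          _ = ∑ y : (T : Finset (Fin Q)), f y := e.sum_comp (fun y => f (y : Fin Q))
          _ = ∑ q ∈ T, f q := Finset.sum_coe_sort _ f
      exact step1.trans (Finset.sum_le_sum_of_subset_of_nonneg hTsub
        fun q _ _ => hfnn q)
    have hS : ∑ q ∈ S, f q = ∑ q ∈ S ∩ C, f q + ∑ q ∈ S \ C, f q :=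
      (Finset.sum_inter_add_sum_sdiff S C f).symm
    have hCsum : ∑ q ∈ C, f q = ∑ q ∈ C ∩ S, f q + ∑ q ∈ C \ S, f q :=
      (Finset.sum_inter_add_sum_sdiff C S f).symm
    rw [hS, hCsum, Finset.inter_comm]
    linarith
  -- compute the Frobenius sums
  have hZhatSum : ∑ p, ∑ q, ((Zhat - Z) p q) ^ 2 = ∑ q ∈ Cᶜ, f q := by
    rw [Finset.sum_comm]
    rw [← Finset.sum_add_sum_compl C fun q => ∑ p, ((Zhat - Z) p q) ^ 2]
    have h1 : ∑ q ∈ C, ∑ p, ((Zhat - Z) p q) ^ 2 = 0 := by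
      apply Finset.sum_eq_zero
      intro q hq
      apply Finset.sum_eq_zero
      intro p _
      simp [Matrix.sub_apply, hZhat, hq]
    have h2 : ∑ q ∈ Cᶜ, ∑ p, ((Zhat - Z) p q) ^ 2 = ∑ q ∈ Cᶜ, f q := by
      apply Finset.sum_congr rfl
      intro q hq
      have hq' : q ∉ C := Finset.mem_compl.mp hq
      apply Finset.sum_congr rfl
      intro p _
      simp [Matrix.sub_apply, hZhat, hq', hfdef]
    rw [h1, h2, zero_add]
  have hWSum : ∑ q ∈ Sᶜ, f q ≤ ∑ p, ∑ q, ((W - Z) p q) ^ 2 := by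
    have : ∑ q ∈ Sᶜ, f q = ∑ q ∈ Sᶜ, ∑ p, ((W - Z) p q) ^ 2 := by
      apply Finset.sum_congr rfl
      intro q hq
      have hq' : q ∉ S := Finset.mem_compl.mp hq
      have hWz : ∀ p, W p q = 0 := by
        intro p
        by_contra hne
        exact hq' (Finset.mem_filter.mpr ⟨Finset.mem_univ q, ⟨p, hne⟩⟩)
      apply Finset.sum_congr rfl
      intro p _
      simp [Matrix.sub_apply, hWz p, hfdef]
    rw [this]
    calc ∑ q ∈ Sᶜ, ∑ p, ((W - Z) p q) ^ 2
        ≤ ∑ q, ∑ p, ((W - Z) p q) ^ 2 :=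
          Finset.sum_le_sum_of_subset_of_nonneg (Finset.subset_univ _)
            (fun q _ _ => Finset.sum_nonneg fun p _ => sq_nonneg _)
      _ = ∑ p, ∑ q, ((W - Z) p q) ^ 2 := Finset.sum_comm
  have hcompl : ∑ q ∈ Cᶜ, f q ≤ ∑ q ∈ Sᶜ, f q := by
    have h1 : ∑ q ∈ C, f q + ∑ q ∈ Cᶜ, f q = ∑ q, f q :=
      Finset.sum_add_sum_compl C f
    have h2 : ∑ q ∈ S, f q + ∑ q ∈ Sᶜ, f q = ∑ q, f q :=
      Finset.sum_add_sum_compl S f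
    linarith
  unfold frobNorm
  apply Real.sqrt_le_sqrt
  rw [hZhatSum]
  exact hcompl.trans hWSum
end

section
/- Let P, Q be positive integers, k ≤ P, and Z ∈ ℝ^{P×Q}. Let R̂ be a set of row indices with |R̂| = k such that the Euclidean norm of the p-th row of Z is at least the Euclidean norm of the p'-th row of Z for every p ∈ R̂ and every p' ∉ R̂. Define Ẑ ∈ ℝ^{P×Q} by keeping the rows of Z indexed by R̂ intact and setting all other rows to zero. Then for every matrix W ∈ ℝ^{P×Q} having at most k nonzero rows, ‖Ẑ − Z‖_F ≤ ‖W − Z‖_F. -/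
/-- Euclidean (ℓ₂) norm of the `p`-th row of a real `P × Q` matrix. -/
noncomputable def rowNorm {P Q : ℕ} (A : Matrix (Fin P) (Fin Q) ℝ) (p : Fin P) : ℝ :=
  Real.sqrt (∑ q, (A p q) ^ 2)

open Classical in
/-- Correctness of the filter-pruning projection: keeping the `k` rows of
largest ℓ₂ norm intact and zeroing the remaining rows yields a Frobenius-norm
projection onto the set of matrices with at most `k` nonzero rows. -/
theorem stmt_6 (P Q k : ℕ) (hP : 0 < P) (hQ : 0 < Q) (hk : k ≤ P)
    (Z : Matrix (Fin P) (Fin Q) ℝ)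
    (R : Finset (Fin P)) (hR : R.card = k)
    (hRtop : ∀ p ∈ R, ∀ p' ∉ R, rowNorm Z p' ≤ rowNorm Z p)
    (Zhat : Matrix (Fin P) (Fin Q) ℝ)
    (hZhat : ∀ p q, Zhat p q = if p ∈ R then Z p q else 0) :
    ∀ W : Matrix (Fin P) (Fin Q) ℝ,
      (Finset.univ.filter fun p => ∃ q, W p q ≠ 0).card ≤ k →
      frobNorm (Zhat - Z) ≤ frobNorm (W - Z) := by
  intro W hW
  set g : Fin P → ℝ := fun p => ∑ q, (Z p q) ^ 2 with hg
  have hg0 : ∀ p, 0 ≤ g p := fun p => Finset.sum_nonneg fun q _ => sq_nonneg _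
  set S : Finset (Fin P) := Finset.univ.filter fun p => ∃ q, W p q ≠ 0 with hS
  -- row-norm comparison in terms of g
  have hgle : ∀ p ∈ R, ∀ p' ∉ R, g p' ≤ g p := by
    intro p hp p' hp'
    have h := hRtop p hp p' hp'
    rw [rowNorm, rowNorm] at h
    exact (Real.sqrt_le_sqrt_iff (hg0 p)).mp h
  apply Real.sqrt_le_sqrt
  -- LHS sum equals ∑_{p ∉ R} g p
  have hL : ∑ p, ∑ q, ((Zhat - Z) p q) ^ 2 = ∑ p ∈ Rᶜ, g p := by
    rw [show (Rᶜ : Finset (Fin P)) = Finset.univ.filter (fun p => p ∉ R) by ext p; simp]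
    rw [← Finset.sum_filter_add_sum_filter_not Finset.univ (fun p => p ∈ R)]
    have h1 : ∑ p ∈ Finset.univ.filter (fun p => p ∈ R), ∑ q, ((Zhat - Z) p q) ^ 2 = 0 := by
      apply Finset.sum_eq_zero
      intro p hp
      simp only [Finset.mem_filter] at hp
      apply Finset.sum_eq_zero
      intro q _
      simp [Matrix.sub_apply, hZhat, hp.2]
    rw [h1, zero_add]
    apply Finset.sum_congr rfl
    intro p hp
    simp only [Finset.mem_filter] at hp
    apply Finset.sum_congr rfl
    intro q _
    simp [Matrix.sub_apply, hZhat, hp.2]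
  -- RHS sum is at least ∑_{p ∉ S} g p
  have hRhs : ∑ p ∈ Sᶜ, g p ≤ ∑ p, ∑ q, ((W - Z) p q) ^ 2 := by
    rw [← Finset.sum_add_sum_compl S (fun p => ∑ q, ((W - Z) p q) ^ 2)]
    have h2 : ∑ p ∈ Sᶜ, g p ≤ ∑ p ∈ Sᶜ, ∑ q, ((W - Z) p q) ^ 2 := by
      apply Finset.sum_le_sum
      intro p hp
      simp only [hS, Finset.mem_compl, Finset.mem_filter, Finset.mem_univ, true_and,
        not_exists, not_not] at hp
      apply le_of_eq
      apply Finset.sum_congr rfl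
      intro q _
      simp [Matrix.sub_apply, hp q]
    refine le_trans h2 ?_
    have : 0 ≤ ∑ p ∈ S, ∑ q, ((W - Z) p q) ^ 2 :=
      Finset.sum_nonneg fun p _ => Finset.sum_nonneg fun q _ => sq_nonneg _
    linarith
  rw [hL]
  refine le_trans ?_ hRhs
  -- key: ∑_{Rᶜ} g ≤ ∑_{Sᶜ} g, i.e. ∑_S g ≤ ∑_R g
  have hkey : ∑ p ∈ S, g p ≤ ∑ p ∈ R, g p := by
    have hSsplit : ∑ p ∈ S, g p = ∑ p ∈ S ∩ R, g p + ∑ p ∈ S \ R, g p := by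
      rw [← Finset.sum_inter_add_sum_sdiff]
    have hRsplit : ∑ p ∈ R, g p = ∑ p ∈ R ∩ S, g p + ∑ p ∈ R \ S, g p := by
      rw [← Finset.sum_inter_add_sum_sdiff]
    have hdiff : ∑ p ∈ S \ R, g p ≤ ∑ p ∈ R \ S, g p := by
      rcases (S \ R).eq_empty_or_nonempty with he | hne
      · rw [he, Finset.sum_empty]
        exact Finset.sum_nonneg fun p _ => hg0 p
      · obtain ⟨x, hx, hxmax⟩ := Finset.exists_max_image (S \ R) g hne
        have hxS : x ∈ S := (Finset.mem_sdiff.mp hx).1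
        have hxR : x ∉ R := (Finset.mem_sdiff.mp hx).2
        have hcard : (S \ R).card ≤ (R \ S).card := by
          have h1 := Finset.card_sdiff_add_card_inter S R
          have h2 := Finset.card_sdiff_add_card_inter R S
          rw [Finset.inter_comm R S] at h2
          omega
        calc ∑ p ∈ S \ R, g p ≤ ∑ _p ∈ S \ R, g x :=
              Finset.sum_le_sum fun p hp => hxmax p hp
          _ = (S \ R).card • g x := by rw [Finset.sum_const]
          _ ≤ (R \ S).card • g x := by
              apply nsmul_le_nsmul_left (hg0 x) hcard
          _ = ∑ _p ∈ R \ S, g x := by rw [Finset.sum_const]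
          _ ≤ ∑ p ∈ R \ S, g p := by
              apply Finset.sum_le_sum
              intro p hp
              exact hgle p (Finset.mem_sdiff.mp hp).1 x hxR
    rw [hSsplit, hRsplit, Finset.inter_comm]
    linarith
  have h1 := Finset.sum_add_sum_compl R g
  have h2 := Finset.sum_add_sum_compl S g
  linarith
end
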